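/- Consider the OpenRC dynamics with abstract weights a, b : ℕ → Fin n → Fin n → ℝ satisfying, for every k, the column-sum conditions: for every i ∈ R k, ∑_{j ∈ R k} a k j i = 1, and for every i ∈ D k, ∑_{j ∈ R k} b k j i = 1. Assume the state x : ℕ → Fin n → ℝ satisfies, for every k: x (k+1) j = ∑_{i ∈ R k} a k j i · x k i + ∑_{i ∈ D k} b k j i · (x k i − x̂ k i) for j ∈ R k, and x (k+1) j = x̂ (k+1) j for j ∈ J k; and at time 0, x 0 j = x̂ 0 j for every j ∈ V 0. Then for every k ≥ 0, ∑_{j ∈ V k} x k j = ∑_{j ∈ V k} x̂ k j (abstract form of Theorem 1: any mixing weights whose per-sender totals over remaining agents equal 1 preserve the total mass of the active agents). -/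
import Mathlib


/-- Abstract form of Theorem 1 of the OpenRC paper: any mixing weights whose
per-sender totals over the remaining agents equal 1 preserve the total mass of
the active agents. -/
theorem openRC_mass_preservation_abstract {n : ℕ}
    (V : ℕ → Finset (Fin n)) (xhat : ℕ → Fin n → ℝ)
    (x : ℕ → Fin n → ℝ)
    (a b : ℕ → Fin n → Fin n → ℝ)
    -- context: joining masses of remaining agents do not change
    (hxhatR : ∀ k, ∀ j ∈ V k ∩ V (k + 1), xhat (k + 1) j = xhat k j)
    -- column-sum conditions
    (ha : ∀ k, ∀ i ∈ V k ∩ V (k + 1), ∑ j ∈ V k ∩ V (k + 1), a k j i = 1)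
    (hb : ∀ k, ∀ i ∈ V k \ V (k + 1), ∑ j ∈ V k ∩ V (k + 1), b k j i = 1)
    -- the update
    (hrem : ∀ k, ∀ j ∈ V k ∩ V (k + 1),
      x (k + 1) j = ∑ i ∈ V k ∩ V (k + 1), a k j i * x k i
        + ∑ i ∈ V k \ V (k + 1), b k j i * (x k i - xhat k i))
    (hjoin : ∀ k, ∀ j ∈ V (k + 1) \ V k, x (k + 1) j = xhat (k + 1) j)
    -- initial condition
    (hinit : ∀ j ∈ V 0, x 0 j = xhat 0 j) :
    ∀ k, ∑ j ∈ V k, x k j = ∑ j ∈ V k, xhat k j := by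
  intro k
  induction k with
  | zero => exact Finset.sum_congr rfl hinit
  | succ k ih =>
    have hsplit1 : ∀ f : Fin n → ℝ,
        ∑ j ∈ V (k+1), f j
          = ∑ j ∈ V k ∩ V (k+1), f j + ∑ j ∈ V (k+1) \ V k, f j := by
      intro f
      rw [← Finset.sum_union (by
        simp only [Finset.disjoint_left, Finset.mem_inter, Finset.mem_sdiff]
        tauto)]
      congr 1
      ext j
      simp only [Finset.mem_union, Finset.mem_inter, Finset.mem_sdiff]
      tauto
    have hsplit2 : ∀ f : Fin n → ℝ,
        ∑ j ∈ V k, f j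
          = ∑ j ∈ V k ∩ V (k+1), f j + ∑ j ∈ V k \ V (k+1), f j := by
      intro f
      rw [← Finset.sum_union (by
        simp only [Finset.disjoint_left, Finset.mem_inter, Finset.mem_sdiff]
        tauto)]
      congr 1
      ext j
      simp only [Finset.mem_union, Finset.mem_inter, Finset.mem_sdiff]
      tauto
    have hRx : ∑ j ∈ V k ∩ V (k+1), x (k+1) j
        = ∑ i ∈ V k ∩ V (k+1), x k i
          + ∑ i ∈ V k \ V (k+1), (x k i - xhat k i) := by
      rw [Finset.sum_congr rfl (hrem k), Finset.sum_add_distrib]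
      congr 1
      · rw [Finset.sum_comm]
        refine Finset.sum_congr rfl fun i hi => ?_
        rw [← Finset.sum_mul, ha k i hi, one_mul]
      · rw [Finset.sum_comm]
        refine Finset.sum_congr rfl fun i hi => ?_
        rw [← Finset.sum_mul, hb k i hi, one_mul]
    calc ∑ j ∈ V (k+1), x (k+1) j
        = ∑ j ∈ V k ∩ V (k+1), x (k+1) j + ∑ j ∈ V (k+1) \ V k, x (k+1) j :=
          hsplit1 _
      _ = (∑ i ∈ V k ∩ V (k+1), x k i + ∑ i ∈ V k \ V (k+1), (x k i - xhat k i))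
            + ∑ j ∈ V (k+1) \ V k, xhat (k+1) j := by
          rw [hRx, Finset.sum_congr rfl (hjoin k)]
      _ = (∑ j ∈ V k, x k j - ∑ i ∈ V k \ V (k+1), xhat k i)
            + ∑ j ∈ V (k+1) \ V k, xhat (k+1) j := by
          rw [hsplit2 (x k), Finset.sum_sub_distrib]; ring
      _ = (∑ j ∈ V k, xhat k j - ∑ i ∈ V k \ V (k+1), xhat k i)
            + ∑ j ∈ V (k+1) \ V k, xhat (k+1) j := by rw [ih]
      _ = ∑ j ∈ V k ∩ V (k+1), xhat k j + ∑ j ∈ V (k+1) \ V k, xhat (k+1) j := by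
          rw [hsplit2 (xhat k)]; ring
      _ = ∑ j ∈ V k ∩ V (k+1), xhat (k+1) j + ∑ j ∈ V (k+1) \ V k, xhat (k+1) j := by
          rw [Finset.sum_congr rfl fun j hj => (hxhatR k j hj).symm]
      _ = ∑ j ∈ V (k+1), xhat (k+1) j := (hsplit1 _).symm
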